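/- (Crossing direction theorem.) Let s₀ = σ₀ + iω₀ with ω₀ real and let h₀ be a real number such that 1 + G(s₀)·e^{−h₀·s₀} = 0 and G′(s₀) − h₀·G(s₀) ≠ 0 (s₀ is a simple characteristic root). Then sign( Re( s₀·( G′(s₀)/G(s₀) − h₀ )^{−1} ) ) = sign( σ₀·φ′(ω₀) ). Equivalently, with f(s,h) = 1 + G(s)·e^{−h·s}, the crossing direction sign( Re( −(∂f/∂h)(∂f/∂s)^{−1} ) ) at (s₀,h₀) equals sign(σ₀·φ′(ω₀)). -/

import Mathlib

open Complex Real Filter Finset Set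

private lemma sign_div_pos' (x c : ℝ) (hc : 0 < c) : Real.sign (x / c) = Real.sign x := by
  rcases lt_trichotomy x 0 with h | h | h
  · rw [Real.sign_of_neg h, Real.sign_of_neg (div_neg_of_neg_of_pos h hc)]
  · simp [h]
  · rw [Real.sign_of_pos h, Real.sign_of_pos (div_pos h hc)]

theorem stmt_12
    (m n : ℕ) (kG : ℝ) (hkG : kG ≠ 0)
    (σz ωz : Fin m → ℝ) (σp ωp : Fin n → ℝ)
    (σ0 : ℝ) (hσ0 : σ0 < 0)
    (hz : ∀ k, σz k ≠ σ0) (hp : ∀ i, σp i ≠ σ0)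
    (G : ℂ → ℂ)
    (hG : ∀ s : ℂ, G s =
      (kG : ℂ) * (∏ k : Fin m, (s - ((σz k : ℂ) + (ωz k : ℂ) * Complex.I))) /
        (∏ i : Fin n, (s - ((σp i : ℂ) + (ωp i : ℂ) * Complex.I))))
    (γz : Fin m → ℝ → ℝ)
    (hγz : ∀ (k : Fin m) (ω : ℝ), γz k ω = (σ0 - σz k) ^ 2 + (ω - ωz k) ^ 2)
    (γp : Fin n → ℝ → ℝ)
    (hγp : ∀ (i : Fin n) (ω : ℝ), γp i ω = (σ0 - σp i) ^ 2 + (ω - ωp i) ^ 2)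
    (H : ℝ → ℝ)
    (hH : ∀ ω : ℝ, H ω = Real.log (‖G ((σ0 : ℂ) + (ω : ℂ) * Complex.I)‖) / σ0)
    (Θ : ℝ → ℝ)
    (hΘ : ∀ ω : ℝ, Θ ω =
      (∑ k : Fin m, Real.arctan ((ω - ωz k) / (σ0 - σz k)))
        - ∑ i : Fin n, Real.arctan ((ω - ωp i) / (σ0 - σp i)))
    (φ : ℝ → ℝ) (hφ : ∀ ω : ℝ, φ ω = Θ ω - ω * H ω)
    (ω0 h0 : ℝ) (s0 : ℂ) (hs0 : s0 = (σ0 : ℂ) + (ω0 : ℂ) * Complex.I)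
    (hchar : 1 + G s0 * Complex.exp (-(h0 : ℂ) * s0) = 0)
    (hsimple : deriv G s0 - (h0 : ℂ) * G s0 ≠ 0)
    : Real.sign ((s0 * (deriv G s0 / G s0 - (h0 : ℂ))⁻¹).re) = Real.sign (σ0 * deriv φ ω0) ∧
      Real.sign
          ((-(deriv (fun h : ℝ => 1 + G s0 * Complex.exp (-(h : ℂ) * s0)) h0) *
              (deriv (fun s : ℂ => 1 + G s * Complex.exp (-(h0 : ℂ) * s)) s0)⁻¹).re) =
        Real.sign (σ0 * deriv φ ω0) := by
  subst hs0
  set sc : ℂ := (σ0 : ℂ) + (ω0 : ℂ) * Complex.I with hsc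
  have hσ0ne : σ0 ≠ 0 := ne_of_lt hσ0
  -- nonvanishing of linear factors on the line
  have hzne : ∀ (ω : ℝ) (k : Fin m),
      ((σ0 : ℂ) + (ω : ℂ) * Complex.I - ((σz k : ℂ) + (ωz k : ℂ) * Complex.I)) ≠ 0 := by
    intro ω k h
    apply hz k
    have h2 := congrArg Complex.re h
    simp at h2
    linarith
  have hpne : ∀ (ω : ℝ) (i : Fin n),
      ((σ0 : ℂ) + (ω : ℂ) * Complex.I - ((σp i : ℂ) + (ωp i : ℂ) * Complex.I)) ≠ 0 := by
    intro ω i h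
    apply hp i
    have h2 := congrArg Complex.re h
    simp at h2
    linarith
  have hσzne : ∀ k : Fin m, σ0 - σz k ≠ 0 := fun k => sub_ne_zero.mpr (Ne.symm (hz k))
  have hσpne : ∀ i : Fin n, σ0 - σp i ≠ 0 := fun i => sub_ne_zero.mpr (Ne.symm (hp i))
  have hγzpos : ∀ (ω : ℝ) (k : Fin m), 0 < (σ0 - σz k) ^ 2 + (ω - ωz k) ^ 2 := by
    intro ω k
    have := hσzne k
    positivity
  have hγppos : ∀ (ω : ℝ) (i : Fin n), 0 < (σ0 - σp i) ^ 2 + (ω - ωp i) ^ 2 := by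
    intro ω i
    have := hσpne i
    positivity
  have hPzne : ∀ ω : ℝ, (∏ k : Fin m,
      ((σ0 : ℂ) + (ω : ℂ) * Complex.I - ((σz k : ℂ) + (ωz k : ℂ) * Complex.I))) ≠ 0 :=
    fun ω => Finset.prod_ne_zero_iff.mpr fun k _ => hzne ω k
  have hPpne : ∀ ω : ℝ, (∏ i : Fin n,
      ((σ0 : ℂ) + (ω : ℂ) * Complex.I - ((σp i : ℂ) + (ωp i : ℂ) * Complex.I))) ≠ 0 :=
    fun ω => Finset.prod_ne_zero_iff.mpr fun i _ => hpne ω i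
  have hGne : G sc ≠ 0 := by
    rw [hG]
    exact div_ne_zero (mul_ne_zero (Complex.ofReal_ne_zero.mpr hkG) (hPzne ω0)) (hPpne ω0)
  -- the logarithmic derivative of G at sc
  set Lc : ℂ := (∑ k : Fin m, (sc - ((σz k : ℂ) + (ωz k : ℂ) * Complex.I))⁻¹)
      - ∑ i : Fin n, (sc - ((σp i : ℂ) + (ωp i : ℂ) * Complex.I))⁻¹ with hLc
  have hznes : ∀ k : Fin m, (sc - ((σz k : ℂ) + (ωz k : ℂ) * Complex.I)) ≠ 0 := fun k => hzne ω0 k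
  have hpnes : ∀ i : Fin n, (sc - ((σp i : ℂ) + (ωp i : ℂ) * Complex.I)) ≠ 0 := fun i => hpne ω0 i
  have hFdz : DifferentiableAt ℂ
      (fun s : ℂ => ∏ k : Fin m, (s - ((σz k : ℂ) + (ωz k : ℂ) * Complex.I))) sc :=
    DifferentiableAt.fun_finsetProd fun k _ => differentiableAt_fun_id.sub_const _
  have hFdp : DifferentiableAt ℂ
      (fun s : ℂ => ∏ i : Fin n, (s - ((σp i : ℂ) + (ωp i : ℂ) * Complex.I))) sc :=
    DifferentiableAt.fun_finsetProd fun i _ => differentiableAt_fun_id.sub_const _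
  have hFdiff : DifferentiableAt ℂ (fun s : ℂ =>
      (kG : ℂ) * (∏ k : Fin m, (s - ((σz k : ℂ) + (ωz k : ℂ) * Complex.I))) /
        (∏ i : Fin n, (s - ((σp i : ℂ) + (ωp i : ℂ) * Complex.I)))) sc :=
    ((differentiableAt_const _).mul hFdz).div hFdp (hPpne ω0)
  have hlogF : logDeriv (fun s : ℂ =>
      (kG : ℂ) * (∏ k : Fin m, (s - ((σz k : ℂ) + (ωz k : ℂ) * Complex.I))) /
        (∏ i : Fin n, (s - ((σp i : ℂ) + (ωp i : ℂ) * Complex.I)))) sc = Lc := by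
    have hmain := logDeriv_div sc
        (f := fun s : ℂ => (kG : ℂ) * ∏ k : Fin m, (s - ((σz k : ℂ) + (ωz k : ℂ) * Complex.I)))
        (g := fun s : ℂ => ∏ i : Fin n, (s - ((σp i : ℂ) + (ωp i : ℂ) * Complex.I)))
        (mul_ne_zero (Complex.ofReal_ne_zero.mpr hkG) (hPzne ω0)) (hPpne ω0)
        ((differentiableAt_const _).mul hFdz) hFdp
    rw [hmain, logDeriv_const_mul sc _ (Complex.ofReal_ne_zero.mpr hkG), hLc]
    congr 1
    · have h := logDeriv_prod (s := (Finset.univ : Finset (Fin m)))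
          (f := fun k (s : ℂ) => s - ((σz k : ℂ) + (ωz k : ℂ) * Complex.I)) (x := sc)
          (fun k _ => hznes k) (fun k _ => differentiableAt_fun_id.sub_const _)
      refine h.trans (Finset.sum_congr rfl fun k _ => ?_)
      rw [logDeriv_apply, deriv_sub_const, deriv_id'', one_div]
    · have h := logDeriv_prod (s := (Finset.univ : Finset (Fin n)))
          (f := fun i (s : ℂ) => s - ((σp i : ℂ) + (ωp i : ℂ) * Complex.I)) (x := sc)
          (fun i _ => hpnes i) (fun i _ => differentiableAt_fun_id.sub_const _)
      refine h.trans (Finset.sum_congr rfl fun i _ => ?_)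
      rw [logDeriv_apply, deriv_sub_const, deriv_id'', one_div]
  have hGhas : HasDerivAt G (Lc * G sc) sc := by
    have h1 : HasDerivAt G (deriv (fun s : ℂ =>
        (kG : ℂ) * (∏ k : Fin m, (s - ((σz k : ℂ) + (ωz k : ℂ) * Complex.I))) /
          (∏ i : Fin n, (s - ((σp i : ℂ) + (ωp i : ℂ) * Complex.I)))) sc) sc :=
      hFdiff.hasDerivAt.congr_of_eventuallyEq (Filter.Eventually.of_forall hG)
    have h2 : deriv (fun s : ℂ =>
        (kG : ℂ) * (∏ k : Fin m, (s - ((σz k : ℂ) + (ωz k : ℂ) * Complex.I))) /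
          (∏ i : Fin n, (s - ((σp i : ℂ) + (ωp i : ℂ) * Complex.I)))) sc = Lc * G sc := by
      have h3 := hlogF
      rw [logDeriv_apply] at h3
      rw [div_eq_iff (by rw [← hG sc] at *; exact hGne)] at h3
      rw [h3]
      congr 1
      exact (hG sc).symm
    rwa [h2] at h1
  have hderivG : deriv G sc = Lc * G sc := hGhas.deriv
  have hGdiff : DifferentiableAt ℂ G sc := hGhas.differentiableAt
  -- the simple-root condition in terms of Lc
  have hMne : Lc - (h0 : ℂ) ≠ 0 := by
    intro h
    apply hsimple
    rw [hderivG]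
    rw [sub_eq_zero] at h
    rw [h]
    ring
  -- the magnitude condition: log |G sc| = h0 σ0
  have hcharG : G sc * Complex.exp (-(h0 : ℂ) * sc) = -1 := by linear_combination hchar
  have hre0 : (-(h0 : ℂ) * sc).re = -(h0 * σ0) := by
    rw [hsc]
    simp
  have habschar : ‖G sc‖ = Real.exp (h0 * σ0) := by
    have h1 := congrArg norm hcharG
    rw [norm_mul, Complex.norm_exp, hre0] at h1
    simp only [norm_neg, norm_one] at h1
    rw [Real.exp_neg] at h1
    rw [mul_inv_eq_one₀ (Real.exp_ne_zero _)] at h1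
    exact h1
  have hlogval : Real.log (‖G sc‖) = h0 * σ0 := by
    rw [habschar, Real.log_exp]
  -- explicit formula for log |G| on the line
  have Hlog : ∀ ω : ℝ, Real.log (‖G ((σ0 : ℂ) + (ω : ℂ) * Complex.I)‖)
      = Real.log |kG| + (∑ k : Fin m, Real.log ((σ0 - σz k) ^ 2 + (ω - ωz k) ^ 2)) / 2
        - (∑ i : Fin n, Real.log ((σ0 - σp i) ^ 2 + (ω - ωp i) ^ 2)) / 2 := by
    intro ω
    rw [hG]
    have habsz : ∀ k : Fin m, ‖(σ0 : ℂ) + (ω : ℂ) * Complex.I - ((σz k : ℂ) + (ωz k : ℂ) * Complex.I)‖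
        = Real.sqrt ((σ0 - σz k) ^ 2 + (ω - ωz k) ^ 2) := by
      intro k
      rw [Complex.norm_def]
      congr 1
      simp [Complex.normSq_apply]
      ring
    have habsp : ∀ i : Fin n, ‖(σ0 : ℂ) + (ω : ℂ) * Complex.I - ((σp i : ℂ) + (ωp i : ℂ) * Complex.I)‖
        = Real.sqrt ((σ0 - σp i) ^ 2 + (ω - ωp i) ^ 2) := by
      intro i
      rw [Complex.norm_def]
      congr 1
      simp [Complex.normSq_apply]
      ring
    rw [norm_div, norm_mul, Complex.norm_real, Real.norm_eq_abs, norm_prod, norm_prod]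
    rw [Real.log_div (mul_ne_zero (abs_ne_zero.mpr hkG)
          (Finset.prod_ne_zero_iff.mpr fun k _ =>
            ne_of_gt (by rw [habsz k]; exact Real.sqrt_pos.mpr (hγzpos ω k))))
        (Finset.prod_ne_zero_iff.mpr fun i _ =>
          ne_of_gt (by rw [habsp i]; exact Real.sqrt_pos.mpr (hγppos ω i)))]
    rw [Real.log_mul (abs_ne_zero.mpr hkG)
        (Finset.prod_ne_zero_iff.mpr fun k _ =>
          ne_of_gt (by rw [habsz k]; exact Real.sqrt_pos.mpr (hγzpos ω k)))]
    rw [Real.log_prod (fun k _ =>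
        ne_of_gt (by rw [habsz k]; exact Real.sqrt_pos.mpr (hγzpos ω k))),
      Real.log_prod (fun i _ =>
        ne_of_gt (by rw [habsp i]; exact Real.sqrt_pos.mpr (hγppos ω i)))]
    have e1 : ∑ k : Fin m, Real.log (‖(σ0 : ℂ) + (ω : ℂ) * Complex.I - ((σz k : ℂ) + (ωz k : ℂ) * Complex.I)‖)
        = (∑ k : Fin m, Real.log ((σ0 - σz k) ^ 2 + (ω - ωz k) ^ 2)) / 2 := by
      rw [Finset.sum_div]
      exact Finset.sum_congr rfl fun k _ => by
        rw [habsz k, Real.log_sqrt (le_of_lt (hγzpos ω k))]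
    have e2 : ∑ i : Fin n, Real.log (‖(σ0 : ℂ) + (ω : ℂ) * Complex.I - ((σp i : ℂ) + (ωp i : ℂ) * Complex.I)‖)
        = (∑ i : Fin n, Real.log ((σ0 - σp i) ^ 2 + (ω - ωp i) ^ 2)) / 2 := by
      rw [Finset.sum_div]
      exact Finset.sum_congr rfl fun i _ => by
        rw [habsp i, Real.log_sqrt (le_of_lt (hγppos ω i))]
    rw [e1, e2]
  -- real sums
  set Tz : ℝ := ∑ k : Fin m, (σ0 - σz k) / ((σ0 - σz k) ^ 2 + (ω0 - ωz k) ^ 2) with hTz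
  set Tp : ℝ := ∑ i : Fin n, (σ0 - σp i) / ((σ0 - σp i) ^ 2 + (ω0 - ωp i) ^ 2) with hTp
  set Sz : ℝ := ∑ k : Fin m, (ω0 - ωz k) / ((σ0 - σz k) ^ 2 + (ω0 - ωz k) ^ 2) with hSz
  set Sp : ℝ := ∑ i : Fin n, (ω0 - ωp i) / ((σ0 - σp i) ^ 2 + (ω0 - ωp i) ^ 2) with hSp
  -- derivative of Θ-part
  have harc : ∀ (a c : ℝ), c ≠ 0 → HasDerivAt (fun ω : ℝ => Real.arctan ((ω - a) / c))
      (c / (c ^ 2 + (ω0 - a) ^ 2)) ω0 := by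
    intro a c hc
    have h := (((hasDerivAt_id ω0).sub_const a).div_const c).arctan
    convert h using 1
    simp only [id_eq]
    have hpos : c ^ 2 + (ω0 - a) ^ 2 ≠ 0 := by positivity
    field_simp
    simp only [id_eq]
  have hΘd : HasDerivAt (fun ω : ℝ =>
      (∑ k : Fin m, Real.arctan ((ω - ωz k) / (σ0 - σz k)))
        - ∑ i : Fin n, Real.arctan ((ω - ωp i) / (σ0 - σp i))) (Tz - Tp) ω0 := by
    rw [hTz, hTp]
    exact (HasDerivAt.fun_sum fun k _ => harc (ωz k) (σ0 - σz k) (hσzne k)).fun_sub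
      (HasDerivAt.fun_sum fun i _ => harc (ωp i) (σ0 - σp i) (hσpne i))
  -- derivative of H-part
  have hlog : ∀ (a c : ℝ), (0 < c ^ 2 + (ω0 - a) ^ 2) →
      HasDerivAt (fun ω : ℝ => Real.log (c ^ 2 + (ω - a) ^ 2))
        (2 * (ω0 - a) / (c ^ 2 + (ω0 - a) ^ 2)) ω0 := by
    intro a c hpos
    have hin : HasDerivAt (fun ω : ℝ => c ^ 2 + (ω - a) ^ 2) (2 * (ω0 - a)) ω0 := by
      have := (((hasDerivAt_id ω0).sub_const a).fun_pow 2).const_add (c ^ 2)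
      exact this.congr_deriv (by simp)
    exact hin.log (ne_of_gt hpos)
  have hHd : HasDerivAt (fun ω : ℝ =>
      (Real.log |kG| + (∑ k : Fin m, Real.log ((σ0 - σz k) ^ 2 + (ω - ωz k) ^ 2)) / 2
        - (∑ i : Fin n, Real.log ((σ0 - σp i) ^ 2 + (ω - ωp i) ^ 2)) / 2) / σ0)
      ((Sz - Sp) / σ0) ω0 := by
    have h1 := ((((HasDerivAt.fun_sum fun k (_ : k ∈ Finset.univ) =>
        hlog (ωz k) (σ0 - σz k) (hγzpos ω0 k)).div_const 2).const_add (Real.log |kG|)).fun_sub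
        ((HasDerivAt.fun_sum fun i (_ : i ∈ Finset.univ) =>
        hlog (ωp i) (σ0 - σp i) (hγppos ω0 i)).div_const 2)).div_const σ0
    have hval : ((∑ k : Fin m, 2 * (ω0 - ωz k) / ((σ0 - σz k) ^ 2 + (ω0 - ωz k) ^ 2)) / 2
        - (∑ i : Fin n, 2 * (ω0 - ωp i) / ((σ0 - σp i) ^ 2 + (ω0 - ωp i) ^ 2)) / 2) / σ0
        = (Sz - Sp) / σ0 := by
      rw [hSz, hSp]
      congr 2
      · rw [Finset.sum_div]
        exact Finset.sum_congr rfl fun k _ => by ring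
      · rw [Finset.sum_div]
        exact Finset.sum_congr rfl fun i _ => by ring
    rw [← hval]
    exact h1
  -- derivative of φ
  have hφd : HasDerivAt φ ((Tz - Tp) -
      (1 * ((Real.log |kG| + (∑ k : Fin m, Real.log ((σ0 - σz k) ^ 2 + (ω0 - ωz k) ^ 2)) / 2
        - (∑ i : Fin n, Real.log ((σ0 - σp i) ^ 2 + (ω0 - ωp i) ^ 2)) / 2) / σ0)
        + ω0 * ((Sz - Sp) / σ0))) ω0 := by
    have hΦ := hΘd.fun_sub ((hasDerivAt_id ω0).fun_mul hHd)
    refine hΦ.congr_of_eventuallyEq (Filter.Eventually.of_forall fun ω => ?_)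
    simp only [id_eq]
    rw [hφ, hΘ, hH, Hlog ω]
  -- value of H at ω0 is h0
  have hHval : (Real.log |kG| + (∑ k : Fin m, Real.log ((σ0 - σz k) ^ 2 + (ω0 - ωz k) ^ 2)) / 2
      - (∑ i : Fin n, Real.log ((σ0 - σp i) ^ 2 + (ω0 - ωp i) ^ 2)) / 2) / σ0 = h0 := by
    rw [← Hlog ω0]
    rw [hlogval]
    field_simp
  -- real and imaginary parts of Lc
  have hinvre : ∀ (a b : ℝ), (((σ0 : ℂ) + (ω0 : ℂ) * Complex.I - ((a : ℂ) + (b : ℂ) * Complex.I))⁻¹).re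
      = (σ0 - a) / ((σ0 - a) ^ 2 + (ω0 - b) ^ 2) := by
    intro a b
    rw [Complex.inv_re]
    have h1 : ((σ0 : ℂ) + (ω0 : ℂ) * Complex.I - ((a : ℂ) + (b : ℂ) * Complex.I)).re = σ0 - a := by simp
    have h2 : Complex.normSq ((σ0 : ℂ) + (ω0 : ℂ) * Complex.I - ((a : ℂ) + (b : ℂ) * Complex.I))
        = (σ0 - a) ^ 2 + (ω0 - b) ^ 2 := by
      simp [Complex.normSq_apply]
      ring
    rw [h1, h2]
  have hinvim : ∀ (a b : ℝ), (((σ0 : ℂ) + (ω0 : ℂ) * Complex.I - ((a : ℂ) + (b : ℂ) * Complex.I))⁻¹).im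
      = -((ω0 - b) / ((σ0 - a) ^ 2 + (ω0 - b) ^ 2)) := by
    intro a b
    rw [Complex.inv_im]
    have h1 : ((σ0 : ℂ) + (ω0 : ℂ) * Complex.I - ((a : ℂ) + (b : ℂ) * Complex.I)).im = ω0 - b := by simp
    have h2 : Complex.normSq ((σ0 : ℂ) + (ω0 : ℂ) * Complex.I - ((a : ℂ) + (b : ℂ) * Complex.I))
        = (σ0 - a) ^ 2 + (ω0 - b) ^ 2 := by
      simp [Complex.normSq_apply]
      ring
    rw [h1, h2, neg_div]
  have hLre : Lc.re = Tz - Tp := by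
    rw [hLc, Complex.sub_re, Complex.re_sum, Complex.re_sum, hTz, hTp]
    congr 1
    · exact Finset.sum_congr rfl fun k _ => hinvre (σz k) (ωz k)
    · exact Finset.sum_congr rfl fun i _ => hinvre (σp i) (ωp i)
  have hLim : Lc.im = Sp - Sz := by
    rw [hLc, Complex.sub_im, Complex.im_sum, Complex.im_sum]
    have e1 : ∑ k : Fin m, ((sc - ((σz k : ℂ) + (ωz k : ℂ) * Complex.I))⁻¹).im = -Sz := by
      rw [hSz, ← Finset.sum_neg_distrib]
      exact Finset.sum_congr rfl fun k _ => hinvim (σz k) (ωz k)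
    have e2 : ∑ i : Fin n, ((sc - ((σp i : ℂ) + (ωp i : ℂ) * Complex.I))⁻¹).im = -Sp := by
      rw [hSp, ← Finset.sum_neg_distrib]
      exact Finset.sum_congr rfl fun i _ => hinvim (σp i) (ωp i)
    rw [e1, e2]
    ring
  have hscre : sc.re = σ0 := by rw [hsc]; simp
  have hscim : sc.im = ω0 := by rw [hsc]; simp
  -- the key sign identity
  have key : Real.sign ((sc * (Lc - (h0 : ℂ))⁻¹).re) = Real.sign (σ0 * deriv φ ω0) := by
    have hnsq : 0 < Complex.normSq (Lc - (h0 : ℂ)) := Complex.normSq_pos.mpr hMne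
    have hmulre : (sc * (Lc - (h0 : ℂ))⁻¹).re
        = (σ0 * (Lc - (h0 : ℂ)).re + ω0 * (Lc - (h0 : ℂ)).im) / Complex.normSq (Lc - (h0 : ℂ)) := by
      rw [Complex.mul_re, Complex.inv_re, Complex.inv_im, hscre, hscim]
      ring
    rw [hmulre, hφd.deriv]
    have hfinal : σ0 * (Lc - (h0 : ℂ)).re + ω0 * (Lc - (h0 : ℂ)).im
        = σ0 * ((Tz - Tp) -
          (1 * ((Real.log |kG| + (∑ k : Fin m, Real.log ((σ0 - σz k) ^ 2 + (ω0 - ωz k) ^ 2)) / 2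
            - (∑ i : Fin n, Real.log ((σ0 - σp i) ^ 2 + (ω0 - ωp i) ^ 2)) / 2) / σ0)
            + ω0 * ((Sz - Sp) / σ0))) := by
      rw [Complex.sub_re, Complex.sub_im, Complex.ofReal_re, Complex.ofReal_im, hLre, hLim,
        hHval]
      field_simp
      ring
    rw [hfinal]
    exact sign_div_pos' _ _ hnsq
  constructor
  · rw [hderivG, mul_div_assoc, div_self hGne, mul_one]
    exact key
  · have hE : Complex.exp (-(h0 : ℂ) * sc) ≠ 0 := Complex.exp_ne_zero _
    have hDh : deriv (fun h : ℝ => 1 + G sc * Complex.exp (-(h : ℂ) * sc)) h0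
        = G sc * (Complex.exp (-(h0 : ℂ) * sc) * -sc) := by
      have hc : HasDerivAt (fun h : ℂ => 1 + G sc * Complex.exp (-h * sc))
          (G sc * (Complex.exp (-(h0 : ℂ) * sc) * -sc)) (h0 : ℂ) := by
        have h1 := ((((hasDerivAt_id (h0 : ℂ)).neg.mul_const sc).cexp).const_mul (G sc)).const_add
          (1 : ℂ)
        simpa using h1
      have hr : HasDerivAt (fun h : ℝ => 1 + G sc * Complex.exp (-(h : ℂ) * sc))
          (G sc * (Complex.exp (-(h0 : ℂ) * sc) * -sc)) h0 := hc.comp_ofReal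
      exact hr.deriv
    have hDs : deriv (fun s : ℂ => 1 + G s * Complex.exp (-(h0 : ℂ) * s)) sc
        = Complex.exp (-(h0 : ℂ) * sc) * (G sc * (Lc - (h0 : ℂ))) := by
      have hinner : HasDerivAt (fun s : ℂ => Complex.exp (-(h0 : ℂ) * s))
          (Complex.exp (-(h0 : ℂ) * sc) * -(h0 : ℂ)) sc := by
        have h1 := ((hasDerivAt_id sc).const_mul (-(h0 : ℂ))).cexp
        simpa using h1
      have h2 : HasDerivAt (fun s : ℂ => 1 + G s * Complex.exp (-(h0 : ℂ) * s))
          (Lc * G sc * Complex.exp (-(h0 : ℂ) * sc)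
            + G sc * (Complex.exp (-(h0 : ℂ) * sc) * -(h0 : ℂ))) sc :=
        (hGhas.mul hinner).const_add 1
      rw [h2.deriv]
      ring
    rw [hDh, hDs]
    have heq : -(G sc * (Complex.exp (-(h0 : ℂ) * sc) * -sc)) *
        (Complex.exp (-(h0 : ℂ) * sc) * (G sc * (Lc - (h0 : ℂ))))⁻¹ = sc * (Lc - (h0 : ℂ))⁻¹ := by
      field_simp
    rw [heq]
    exact key
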